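/- Let k ≥ 1 and let B be a (k+1)×(k+1) complex Hermitian matrix of arrow form: B_{ii} = λ_i for 1 ≤ i ≤ k with λ_1,...,λ_k pairwise distinct reals, B_{ij} = 0 for i ≠ j with i, j ≤ k, B_{i,k+1} = a_i ∈ ℂ and B_{k+1,i} = conj(a_i) for i ≤ k, and B_{k+1,k+1} = c ∈ ℝ. Let μ_1,...,μ_{k+1} ∈ ℝ be the eigenvalues of B counted with multiplicity, i.e. det(X·Id − B) = ∏_{v=1}^{k+1}(X − μ_v), and let j be an index with μ_j ≠ λ_i for all i ∈ {1,...,k}. Then 1 + ∑_{i=1}^{k} |a_i|²/(μ_j − λ_i)² = (∏_{v≠j}(μ_j − μ_v)) / (∏_{i=1}^{k}(μ_j − λ_i)). -/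

import Mathlib

open Matrix

noncomputable section

/-- The Hermitian arrow (bordered diagonal) matrix with leading diagonal block
`diag(λ_1,...,λ_k)`, border entries `a_i` (and their conjugates) and corner entry `c`. -/
def arrowMatrix (k : ℕ) (lam : Fin k → ℝ) (a : Fin k → ℂ) (c : ℝ) :
    Matrix (Fin (k + 1)) (Fin (k + 1)) ℂ :=
  Matrix.of fun i j =>
    if hi : i = Fin.last k then
      (if hj : j = Fin.last k then (c : ℂ) else (starRingEnd ℂ) (a (j.castPred hj)))
    else
      (if hj : j = Fin.last k then a (i.castPred hi)
       else if i = j then (lam (i.castPred hi) : ℂ) else 0)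

lemma arrow_det (k : ℕ) (lam : Fin k → ℝ) (a : Fin k → ℂ) (c : ℝ) (X : ℂ)
    (hX : ∀ i, X - lam i ≠ 0) :
    (X • (1 : Matrix (Fin (k + 1)) (Fin (k + 1)) ℂ) - arrowMatrix k lam a c).det =
      (∏ i, (X - (lam i : ℂ))) *
        ((X - c) - ∑ i, (Complex.normSq (a i) : ℂ) * (X - lam i)⁻¹) := by
  set d : Fin k → ℂ := fun i => X - lam i with hd
  set A : Matrix (Fin k) (Fin k) ℂ := Matrix.diagonal d with hA
  set B : Matrix (Fin k) (Fin 1) ℂ := Matrix.of (fun i _ => -a i) with hB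
  set C : Matrix (Fin 1) (Fin k) ℂ := Matrix.of (fun _ i => -((starRingEnd ℂ) (a i))) with hC
  set D : Matrix (Fin 1) (Fin 1) ℂ := Matrix.of (fun _ _ => X - c) with hD
  have key : (X • (1 : Matrix (Fin (k + 1)) (Fin (k + 1)) ℂ) - arrowMatrix k lam a c).submatrix
      finSumFinEquiv finSumFinEquiv = Matrix.fromBlocks A B C D := by
    ext i j
    cases i with
    | inl i =>
      cases j with
      | inl j =>
        have hjne : (Fin.castAdd 1 j : Fin (k+1)) ≠ Fin.last k := by
          simp [Fin.ext_iff, Fin.castAdd, j.isLt.ne]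
        simp only [Matrix.submatrix_apply, finSumFinEquiv_apply_left, Matrix.sub_apply,
          Matrix.smul_apply, Matrix.one_apply, arrowMatrix, Matrix.of_apply,
          Matrix.fromBlocks_apply₁₁]
        rw [dif_neg hjne]
        by_cases h : i = j
        · subst h
          rw [dif_neg hjne, dif_neg hjne, if_pos rfl, if_pos rfl, hA,
            Matrix.diagonal_apply_eq]
          show X • 1 - ((lam i : ℝ) : ℂ) = X - lam i
          simp
        · have hine : (Fin.castAdd 1 i : Fin (k+1)) ≠ Fin.last k := by
            simp [Fin.ext_iff, Fin.castAdd, i.isLt.ne]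
          have hne : (Fin.castAdd 1 i : Fin (k+1)) ≠ Fin.castAdd 1 j := by
            simpa [Fin.ext_iff, Fin.castAdd] using fun hh => h (Fin.ext hh)
          rw [dif_neg hine, dif_neg hjne, if_neg hne, if_neg hne, hA,
            Matrix.diagonal_apply_ne _ h]
          simp
      | inr j =>
        have hj0 : (finSumFinEquiv (Sum.inr j) : Fin (k+1)) = Fin.last k := by
          simp [finSumFinEquiv_apply_right, Fin.ext_iff, Fin.natAdd, Fin.last,
            Subsingleton.elim j 0]
        have hi : (Fin.castAdd 1 i : Fin (k+1)) ≠ Fin.last k := by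
          simp [Fin.ext_iff, Fin.castAdd, i.isLt.ne]
        simp only [Matrix.submatrix_apply, finSumFinEquiv_apply_left, Matrix.sub_apply,
          Matrix.smul_apply, Matrix.one_apply, arrowMatrix, Matrix.of_apply,
          Matrix.fromBlocks_apply₁₂, hj0]
        simp [hi, hB]
        rfl
    | inr i =>
      have hi0 : (finSumFinEquiv (Sum.inr i) : Fin (k+1)) = Fin.last k := by
        simp [finSumFinEquiv_apply_right, Fin.ext_iff, Fin.natAdd, Fin.last,
          Subsingleton.elim i 0]
      cases j with
      | inl j =>
        have hjne : (Fin.castAdd 1 j : Fin (k+1)) ≠ Fin.last k := by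
          simp [Fin.ext_iff, Fin.castAdd, j.isLt.ne]
        simp only [Matrix.submatrix_apply, finSumFinEquiv_apply_left, Matrix.sub_apply,
          Matrix.smul_apply, Matrix.one_apply, arrowMatrix, Matrix.of_apply,
          Matrix.fromBlocks_apply₂₁, hi0]
        simp [hjne, Ne.symm hjne, hC]
        rfl
      | inr j =>
        have hj0 : (finSumFinEquiv (Sum.inr j) : Fin (k+1)) = Fin.last k := by
          simp [finSumFinEquiv_apply_right, Fin.ext_iff, Fin.natAdd, Fin.last,
            Subsingleton.elim j 0]
        simp only [Matrix.submatrix_apply, Matrix.sub_apply, Matrix.smul_apply,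
          Matrix.one_apply, arrowMatrix, Matrix.of_apply, Matrix.fromBlocks_apply₂₂, hi0, hj0]
        simp [hD]
  have hdet : (X • (1 : Matrix (Fin (k + 1)) (Fin (k + 1)) ℂ) - arrowMatrix k lam a c).det =
      (Matrix.fromBlocks A B C D).det := by
    rw [← key, Matrix.det_submatrix_equiv_self]
  haveI : Invertible A := by
    refine ⟨Matrix.diagonal (fun i => (d i)⁻¹), ?_, ?_⟩ <;>
      simp [hA, Matrix.diagonal_mul_diagonal, inv_mul_cancel₀ (hX _), mul_inv_cancel₀ (hX _),
        Matrix.diagonal_one, d]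
  have hinv : ⅟ A = Matrix.diagonal (fun i => (d i)⁻¹) := by
    apply invOf_eq_right_inv
    simp [hA, Matrix.diagonal_mul_diagonal, mul_inv_cancel₀ (hX _), d]
  rw [hdet, Matrix.det_fromBlocks₁₁, hinv, Matrix.det_fin_one, Matrix.det_diagonal]
  congr 1
  simp only [Matrix.sub_apply, Matrix.mul_apply, Matrix.diagonal_apply, Matrix.of_apply,
    mul_ite, mul_zero, ite_mul, zero_mul, Finset.sum_ite_eq, Finset.sum_ite_eq',
    Finset.mem_univ, if_true, Fin.sum_univ_one, hB, hC, hD]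
  congr 1
  refine Finset.sum_congr rfl fun i _ => ?_
  rw [show -(starRingEnd ℂ) (a i) * (d i)⁻¹ * -a i
        = ((starRingEnd ℂ) (a i) * a i) * (d i)⁻¹ from by ring,
    ← Complex.normSq_eq_conj_mul_self]

lemma deriv_prod_lin {ι : Type*} [DecidableEq ι] (s : Finset ι) (f : ι → ℝ) :
    Polynomial.derivative (∏ i ∈ s, (Polynomial.X - Polynomial.C (f i))) =
      ∑ i ∈ s, ∏ l ∈ s.erase i, (Polynomial.X - Polynomial.C (f l)) := by
  induction s using Finset.induction_on with
  | empty => simp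
  | @insert a s ha ih =>
    rw [Finset.prod_insert ha, Polynomial.derivative_mul, Polynomial.derivative_sub,
      Polynomial.derivative_X, Polynomial.derivative_C, sub_zero, one_mul, ih,
      Finset.sum_insert ha, Finset.erase_insert ha, Finset.mul_sum]
    congr 1
    refine Finset.sum_congr rfl fun i hi => ?_
    rw [Finset.erase_insert_of_ne (by rintro rfl; exact ha hi),
      Finset.prod_insert (fun h => ha (Finset.mem_of_mem_erase h))]

/-- The squared normalizer `1 + ∑_i |a_i|²/(μ_j − λ_i)²` of the eigenvector of an arrow
Hermitian matrix depends only on the spectra: it equals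
`∏_{v≠j}(μ_j − μ_v) / ∏_i(μ_j − λ_i)`. -/
theorem stmt14 (k : ℕ) (hk : 1 ≤ k) (lam : Fin k → ℝ)
    (hlam : Function.Injective lam) (a : Fin k → ℂ) (c : ℝ) (μ : Fin (k + 1) → ℝ)
    (hchar : ∀ X : ℂ,
      (X • (1 : Matrix (Fin (k + 1)) (Fin (k + 1)) ℂ) - arrowMatrix k lam a c).det =
        ∏ v : Fin (k + 1), (X - (μ v : ℂ)))
    (j : Fin (k + 1)) (hj : ∀ i : Fin k, μ j ≠ lam i) :
    1 + ∑ i : Fin k, Complex.normSq (a i) / (μ j - lam i) ^ 2 =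
      (∏ v ∈ Finset.univ.erase j, (μ j - μ v)) / ∏ i : Fin k, (μ j - lam i) := by
  classical
  set n : Fin k → ℝ := fun i => Complex.normSq (a i) with hn_def
  set Pp : Polynomial ℝ :=
    (Polynomial.X - Polynomial.C c) * ∏ i, (Polynomial.X - Polynomial.C (lam i)) -
      ∑ i, Polynomial.C (n i) * ∏ l ∈ Finset.univ.erase i,
        (Polynomial.X - Polynomial.C (lam l)) with hPp
  set Qp : Polynomial ℝ := ∏ v, (Polynomial.X - Polynomial.C (μ v)) with hQp
  have evalP : ∀ y : ℝ, Pp.eval y =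
      (y - c) * ∏ i, (y - lam i) -
        ∑ i, n i * ∏ l ∈ Finset.univ.erase i, (y - lam l) := by
    intro y
    simp [hPp, Polynomial.eval_prod, Polynomial.eval_finset_sum]
  have evalQ : ∀ y : ℝ, Qp.eval y = ∏ v, (y - μ v) := by
    intro y
    simp [hQp, Polynomial.eval_prod]
  have hfun : ∀ y : ℝ, (∀ i, y ≠ lam i) → Pp.eval y = Qp.eval y := by
    intro y hy
    have hX : ∀ i, (y : ℂ) - lam i ≠ 0 := fun i =>
      sub_ne_zero.mpr (by exact_mod_cast hy i)
    have h1 : (∏ v, ((y:ℂ) - μ v)) =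
        ((y:ℂ) - c) * ∏ i, ((y:ℂ) - lam i) -
          ∑ i, ((n i : ℝ) : ℂ) * ∏ l ∈ Finset.univ.erase i, ((y:ℂ) - lam l) := by
      rw [← hchar (y:ℂ), arrow_det k lam a c y hX, mul_sub, Finset.mul_sum]
      congr 1
      · ring
      refine Finset.sum_congr rfl fun i _ => ?_
      rw [← Finset.mul_prod_erase Finset.univ (fun l => (y:ℂ) - (lam l : ℂ))
        (Finset.mem_univ i)]
      have h := hX i
      field_simp [hn_def]
      ring
    apply Complex.ofReal_injective
    rw [evalP, evalQ]
    push_cast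
    exact_mod_cast h1.symm
  have hPQ : Pp = Qp := by
    apply Polynomial.eq_of_infinite_eval_eq
    refine ((Set.finite_range lam).infinite_compl).mono ?_
    intro y hy
    exact hfun y fun i h => hy ⟨i, h.symm⟩
  set x : ℝ := μ j with hx_def
  have hA0 : (x - c) * ∏ i, (x - lam i) -
      ∑ i, n i * ∏ l ∈ Finset.univ.erase i, (x - lam l) = 0 := by
    have h := congrArg (Polynomial.eval x) hPQ
    rw [evalP, evalQ] at h
    rw [h]
    exact Finset.prod_eq_zero (Finset.mem_univ j) (by simp [hx_def])
  have evalDQ : Polynomial.eval x (Polynomial.derivative Qp) =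
      ∏ v ∈ Finset.univ.erase j, (x - μ v) := by
    rw [hQp, deriv_prod_lin, Polynomial.eval_finset_sum]
    simp only [Polynomial.eval_prod, Polynomial.eval_sub, Polynomial.eval_X, Polynomial.eval_C]
    rw [Finset.sum_eq_single j]
    · intro v _ hvj
      exact Finset.prod_eq_zero
        (Finset.mem_erase.mpr ⟨Ne.symm hvj, Finset.mem_univ j⟩) (by simp [hx_def])
    · intro h
      exact absurd (Finset.mem_univ j) h
  have evalDP : Polynomial.eval x (Polynomial.derivative Pp) =
      (∏ i, (x - lam i)) +
        (x - c) * ∑ l, ∏ m ∈ Finset.univ.erase l, (x - lam m) -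
        ∑ i, n i * ∑ l ∈ Finset.univ.erase i,
          ∏ m ∈ (Finset.univ.erase i).erase l, (x - lam m) := by
    have hder : Polynomial.derivative Pp =
        (∏ i, (Polynomial.X - Polynomial.C (lam i))) +
          (Polynomial.X - Polynomial.C c) *
            ∑ l, ∏ m ∈ Finset.univ.erase l, (Polynomial.X - Polynomial.C (lam m)) -
          ∑ i, Polynomial.C (n i) * ∑ l ∈ Finset.univ.erase i,
            ∏ m ∈ (Finset.univ.erase i).erase l, (Polynomial.X - Polynomial.C (lam m)) := by
      rw [hPp, Polynomial.derivative_sub, Polynomial.derivative_mul,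
        Polynomial.derivative_sub, Polynomial.derivative_X, Polynomial.derivative_C,
        sub_zero, one_mul, deriv_prod_lin, Polynomial.derivative_sum]
      congr 1
      refine Finset.sum_congr rfl fun i _ => ?_
      rw [Polynomial.derivative_C_mul, deriv_prod_lin]
    rw [hder]
    simp [Polynomial.eval_finset_sum, Polynomial.eval_prod]
  have hB0 : (∏ i, (x - lam i)) +
      (x - c) * ∑ l, ∏ m ∈ Finset.univ.erase l, (x - lam m) -
      ∑ i, n i * ∑ l ∈ Finset.univ.erase i,
        ∏ m ∈ (Finset.univ.erase i).erase l, (x - lam m) =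
      ∏ v ∈ Finset.univ.erase j, (x - μ v) := by
    rw [← evalDP, ← evalDQ, hPQ]
  -- abbreviations
  set d : Fin k → ℝ := fun i => x - lam i with hd_def
  have hd : ∀ i, d i ≠ 0 := fun i => sub_ne_zero.mpr (hj i)
  set q : ℝ := ∏ i, d i with hq_def
  have hq : q ≠ 0 := Finset.prod_ne_zero_iff.mpr fun i _ => hd i
  have e1 : ∀ i : Fin k, ∏ l ∈ Finset.univ.erase i, d l = q / d i := by
    intro i
    rw [eq_div_iff (hd i), Finset.prod_erase_mul _ _ (Finset.mem_univ i)]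
  have e2 : ∀ i : Fin k, ∀ l ∈ Finset.univ.erase i,
      ∏ m ∈ (Finset.univ.erase i).erase l, d m = q / (d i * d l) := by
    intro i l hl
    have h1 : d l * ∏ m ∈ (Finset.univ.erase i).erase l, d m = q / d i := by
      rw [Finset.mul_prod_erase _ _ hl, e1]
    rw [eq_div_iff (mul_ne_zero (hd i) (hd l))]
    calc (∏ m ∈ (Finset.univ.erase i).erase l, d m) * (d i * d l)
        = (d l * ∏ m ∈ (Finset.univ.erase i).erase l, d m) * d i := by ring
      _ = (q / d i) * d i := by rw [h1]
      _ = q := div_mul_cancel₀ _ (hd i)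
  have hA1 : x - c = ∑ i, n i / d i := by
    have h2 : ∑ i, n i * ∏ l ∈ Finset.univ.erase i, d l = (∑ i, n i / d i) * q := by
      rw [Finset.sum_mul]
      refine Finset.sum_congr rfl fun i _ => ?_
      rw [e1 i]
      field_simp
    rw [h2] at hA0
    have h3 : ((x - c) - ∑ i, n i / d i) * q = 0 := by
      rw [sub_mul]; exact hA0
    rcases mul_eq_zero.mp h3 with h4 | h4
    · linarith [sub_eq_zero.mp h4]
    · exact absurd h4 hq
  have hG : ∏ v ∈ Finset.univ.erase j, (x - μ v) = q * (1 + ∑ i, n i / d i ^ 2) := by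
    rw [← hB0]
    have t1 : ∑ l, ∏ m ∈ Finset.univ.erase l, d m = ∑ l, q / d l :=
      Finset.sum_congr rfl fun l _ => e1 l
    have t3 : ∑ i, n i * ∑ l ∈ Finset.univ.erase i,
        ∏ m ∈ (Finset.univ.erase i).erase l, d m =
        ∑ i, ∑ l ∈ Finset.univ.erase i, n i * (q / (d i * d l)) := by
      refine Finset.sum_congr rfl fun i _ => ?_
      rw [Finset.sum_congr rfl (e2 i), Finset.mul_sum]
    rw [t1, t3, hA1, Finset.sum_mul_sum]
    have t4 : ∀ i : Fin k, ∑ l, (n i / d i) * (q / d l) =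
        n i / d i ^ 2 * q + ∑ l ∈ Finset.univ.erase i, n i * (q / (d i * d l)) := by
      intro i
      rw [← Finset.add_sum_erase _ _ (Finset.mem_univ i)]
      congr 1
      · field_simp
      · refine Finset.sum_congr rfl fun l hl => ?_
        rw [div_mul_div_comm, mul_div_assoc]
    have t5 : ∑ i, ∑ l, (n i / d i) * (q / d l) =
        ∑ i, (n i / d i ^ 2 * q + ∑ l ∈ Finset.univ.erase i, n i * (q / (d i * d l))) :=
      Finset.sum_congr rfl fun i _ => t4 i
    rw [t5, Finset.sum_add_distrib, mul_add, mul_one, Finset.mul_sum]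
    have t6 : ∑ i, q * (n i / d i ^ 2) = ∑ i, n i / d i ^ 2 * q :=
      Finset.sum_congr rfl fun i _ => by ring
    rw [t6]
    ring
  rw [hG, mul_div_cancel_left₀ _ hq]
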